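/- Let E ⊆ F be a finite extension of p-adic fields, X a standard subset defined over E, and let A_E(X) and A_F(X) denote the rings of bounded analytic functions over E and F respectively (A_E(X) being the Gal-invariants of A_L(X) for L/E large Galois). Then the natural map F ⊗_E A_E(X) → A_F(X), a ⊗ f ↦ a·f, is an isomorphism of F-algebras. -/

import Mathlib

open TensorProduct

section Descent

variable (E L V : Type*) [Field E] [Field L] [Algebra E L]
  [FiniteDimensional E L] [IsGalois E L]
  [AddCommGroup V] [Module E V] [Module L V] [IsScalarTower E L V]

/-- The invariants of a semilinear action of `Gal(L/E)` on `V`. -/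
noncomputable def galInvariants (ρ : (L ≃ₐ[E] L) →* Module.End E V) : Submodule E V :=
  ⨅ σ : L ≃ₐ[E] L, LinearMap.eqLocus (ρ σ) (LinearMap.id)

/-- The invariants of `V` under the subgroup of `Gal(L/E)` fixing an intermediate
field `F` pointwise. -/
noncomputable def galInvariantsOver (ρ : (L ≃ₐ[E] L) →* Module.End E V)
    (F : IntermediateField E L) : Submodule E V :=
  ⨅ σ : {σ : L ≃ₐ[E] L // ∀ x : F, σ (x : L) = (x : L)},
    LinearMap.eqLocus (ρ σ.1) (LinearMap.id)

/-- The natural map `F ⊗_E V^{Gal(L/E)} → V`, `a ⊗ v ↦ a • v`. -/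
noncomputable def descentMap (ρ : (L ≃ₐ[E] L) →* Module.End E V)
    (F : IntermediateField E L) :
    (↥F ⊗[E] ↥(galInvariants E L V ρ)) →ₗ[E] V :=
  TensorProduct.lift <|
    LinearMap.mk₂ E (fun (a : ↥F) (v : ↥(galInvariants E L V ρ)) => (a : L) • (v : V))
      (fun a b v => by push_cast; rw [add_smul])
      (fun c a v => by
        show ((c • a : ↥F) : L) • (v : V) = c • ((a : L) • (v : V))
        rw [show ((c • a : ↥F) : L) = c • (a : L) from rfl, smul_assoc])
      (fun a v w => by push_cast; rw [smul_add])
      (fun c a v => by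
        show (a : L) • ((c • v : ↥(galInvariants E L V ρ)) : V) = c • ((a : L) • (v : V))
        rw [show ((c • v : ↥(galInvariants E L V ρ)) : V) = c • (v : V) from rfl, smul_comm])

end Descent

set_option linter.unusedSectionVars false
set_option maxHeartbeats 1000000

section Aux
variable {E L V : Type*} [Field E] [Field L] [Algebra E L]
  [FiniteDimensional E L] [IsGalois E L]
  [AddCommGroup V] [Module E V] [Module L V] [IsScalarTower E L V]
  (ρ : (L ≃ₐ[E] L) →* Module.End E V)

lemma mem_galInvariants_iff (v : V) :
    v ∈ galInvariants E L V ρ ↔ ∀ σ, ρ σ v = v := by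
  simp only [galInvariants, Submodule.mem_iInf, LinearMap.mem_eqLocus, LinearMap.id_apply]

lemma aut_linearIndependent :
    LinearIndependent L (fun σ : L ≃ₐ[E] L => (σ : L → L)) := by
  have h := linearIndependent_monoidHom L L
  have := h.comp (fun σ : L ≃ₐ[E] L => (σ : L →* L))
    (fun σ τ hst => by ext x; exact DFunLike.congr_fun hst x)
  exact this

lemma sum_conj_mem (hsemi : ∀ (σ : L ≃ₐ[E] L) (c : L) (v : V), ρ σ (c • v) = σ c • ρ σ v)
    (v : V) (c : L) :
    (∑ σ : L ≃ₐ[E] L, σ c • ρ σ v) ∈ galInvariants E L V ρ := by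
  rw [mem_galInvariants_iff]
  intro τ
  have : ∀ σ : L ≃ₐ[E] L, ρ τ (σ c • ρ σ v) = (τ * σ) c • ρ (τ * σ) v := by
    intro σ
    rw [hsemi, map_mul]
    rfl
  rw [map_sum]
  simp_rw [this]
  exact Fintype.sum_equiv (Equiv.mulLeft τ) _ _ (fun σ => rfl)

lemma mem_span_invariants
    (hsemi : ∀ (σ : L ≃ₐ[E] L) (c : L) (v : V), ρ σ (c • v) = σ c • ρ σ v) (v : V) :
    v ∈ Submodule.span L ((galInvariants E L V ρ : Set V)) := by
  classical
  set n := Module.finrank E L with hn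
  let b : Module.Basis (Fin n) E L := Module.finBasis E L
  have hcard : Fintype.card (L ≃ₐ[E] L) = n := by
    rw [← Nat.card_eq_fintype_card]; exact IsGalois.card_aut_eq_finrank E L
  let e : (L ≃ₐ[E] L) ≃ Fin n := Fintype.equivFinOfCardEq hcard
  set M : Matrix (L ≃ₐ[E] L) (L ≃ₐ[E] L) L := Matrix.of (fun σ τ => σ (b (e τ))) with hMdef
  have hM : IsUnit M := by
    rw [← Matrix.linearIndependent_rows_iff_isUnit]
    rw [Fintype.linearIndependent_iff]
    intro g hg σ₀
    have hb : ∀ i : Fin n, ∑ σ, g σ * σ (b i) = 0 := by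
      intro i
      have := congr_fun hg (e.symm i)
      simpa [M, Finset.sum_apply, Pi.smul_apply, smul_eq_mul] using this
    have hx : ∀ x : L, ∑ σ, g σ * σ x = 0 := by
      intro x
      conv_lhs => rw [← Module.Basis.sum_repr b x]
      have : ∀ σ : L ≃ₐ[E] L, g σ * σ (∑ i, b.repr x i • b i)
          = ∑ i, b.repr x i • (g σ * σ (b i)) := by
        intro σ
        rw [map_sum]
        rw [Finset.mul_sum]
        congr 1
        ext i
        rw [map_smul, mul_smul_comm]
      simp_rw [this]
      rw [Finset.sum_comm]
      refine Finset.sum_eq_zero (fun i _ => ?_)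
      rw [← Finset.smul_sum, hb, smul_zero]
    have := Fintype.linearIndependent_iff.mp
      (aut_linearIndependent (E := E) (L := L)) g ?_ σ₀
    · exact this
    · funext x
      simpa [Finset.sum_apply, Pi.smul_apply, smul_eq_mul] using hx x
  obtain ⟨d, hd⟩ := (Matrix.mulVec_surjective_iff_isUnit.mpr hM) (Pi.single 1 1)
  have hv : v = ∑ τ, d τ • ∑ σ, σ (b (e τ)) • ρ σ v := by
    have expand : ∀ τ, d τ • ∑ σ, σ (b (e τ)) • ρ σ v
        = ∑ σ, (σ (b (e τ)) * d τ) • ρ σ v := by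
      intro τ
      rw [Finset.smul_sum]
      congr 1
      ext σ
      rw [smul_smul, mul_comm]
    simp_rw [expand]
    rw [Finset.sum_comm]
    have : ∀ σ, ∑ τ, (σ (b (e τ)) * d τ) • ρ σ v = (M.mulVec d σ) • ρ σ v := by
      intro σ
      rw [← Finset.sum_smul]
      rfl
    simp_rw [this, hd]
    rw [Fintype.sum_eq_single (1 : L ≃ₐ[E] L) (fun σ hσ => by
      rw [Pi.single_eq_of_ne hσ, zero_smul])]
    simp
  rw [hv]
  exact Submodule.sum_mem _ (fun τ _ => Submodule.smul_mem _ _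
    (Submodule.subset_span (sum_conj_mem ρ hsemi v (b (e τ)))))

end Aux

section Aux2
variable {E L V : Type*} [Field E] [Field L] [Algebra E L]
  [FiniteDimensional E L] [IsGalois E L]
  [AddCommGroup V] [Module E V] [Module L V] [IsScalarTower E L V]
  (ρ : (L ≃ₐ[E] L) →* Module.End E V)

lemma invariants_linearIndependent {ι : Type*} (w : ι → V)
    (hw : ∀ i, w i ∈ galInvariants E L V ρ)
    (hsemi : ∀ (σ : L ≃ₐ[E] L) (c : L) (v : V), ρ σ (c • v) = σ c • ρ σ v)
    (h : LinearIndependent E w) : LinearIndependent L w := by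
  classical
  rw [linearIndependent_iff'] at h ⊢
  intro s g hg i hi
  have key : ∀ d : L, Algebra.trace E L (d * g i) = 0 := by
    intro d
    have h0 : ∑ j ∈ s, (d * g j) • w j = 0 := by
      have : ∀ j, (d * g j) • w j = d • (g j • w j) := fun j => by rw [smul_smul]
      simp_rw [this]
      rw [← Finset.smul_sum, hg, smul_zero]
    have h1 : ∑ σ : L ≃ₐ[E] L, ρ σ (∑ j ∈ s, (d * g j) • w j) = 0 := by
      rw [h0]; simp
    have h2 : ∀ σ : L ≃ₐ[E] L, ρ σ (∑ j ∈ s, (d * g j) • w j)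
        = ∑ j ∈ s, σ (d * g j) • w j := by
      intro σ
      rw [map_sum]
      refine Finset.sum_congr rfl (fun j _ => ?_)
      rw [hsemi, ((mem_galInvariants_iff ρ (w j)).mp (hw j)) σ]
    rw [Finset.sum_congr rfl (fun σ _ => h2 σ), Finset.sum_comm] at h1
    have h3 : ∀ j ∈ s, ∑ σ : L ≃ₐ[E] L, σ (d * g j) • w j
        = Algebra.trace E L (d * g j) • w j := by
      intro j _
      rw [← Finset.sum_smul, ← trace_eq_sum_automorphisms, algebraMap_smul]
    rw [Finset.sum_congr rfl h3] at h1
    exact h s _ h1 i hi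
  have := (traceForm_nondegenerate E L).1 (g i)
    (fun d => by rw [Algebra.traceForm_apply, mul_comm]; exact key d)
  exact this
end Aux2

section Aux3
variable {E L V : Type*} [Field E] [Field L] [Algebra E L]
  [FiniteDimensional E L] [IsGalois E L]
  [AddCommGroup V] [Module E V] [Module L V] [IsScalarTower E L V]
  (ρ : (L ≃ₐ[E] L) →* Module.End E V)

noncomputable def fullMap : (L ⊗[E] ↥(galInvariants E L V ρ)) →ₗ[E] V :=
  TensorProduct.lift <|
    LinearMap.mk₂ E (fun (c : L) (v : ↥(galInvariants E L V ρ)) => c • (v : V))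
      (fun a b v => by rw [add_smul])
      (fun e a v => by rw [smul_assoc])
      (fun a v w => by push_cast; rw [smul_add])
      (fun e a v => by
        show a • ((e • v : ↥(galInvariants E L V ρ)) : V) = e • (a • (v : V))
        rw [show ((e • v : ↥(galInvariants E L V ρ)) : V) = e • (v : V) from rfl, smul_comm])

lemma fullMap_injective
    (hsemi : ∀ (σ : L ≃ₐ[E] L) (c : L) (v : V), ρ σ (c • v) = σ c • ρ σ v) :
    Function.Injective (fullMap ρ) := by
  classical
  rw [← LinearMap.ker_eq_bot]
  rw [Submodule.eq_bot_iff]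
  intro t ht
  rw [LinearMap.mem_ker] at ht
  let bL : Module.Basis (Fin (Module.finrank E L)) E L := Module.finBasis E L
  -- the representation map
  let Ψ : (Fin (Module.finrank E L) →₀ ↥(galInvariants E L V ρ)) →ₗ[E]
      (L ⊗[E] ↥(galInvariants E L V ρ)) :=
    Finsupp.lsum E (fun p => TensorProduct.mk E L ↥(galInvariants E L V ρ) (bL p))
  have hΨsurj : Function.Surjective Ψ := by
    intro t
    have : t ∈ LinearMap.range Ψ := by
      induction t using TensorProduct.induction_on with
      | zero => exact zero_mem _
      | tmul c u =>
        refine ⟨∑ p, Finsupp.single p (bL.repr c p • u), ?_⟩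
        rw [map_sum]
        have : ∀ p, Ψ (Finsupp.single p (bL.repr c p • u))
            = (bL.repr c p • bL p) ⊗ₜ[E] u := by
          intro p
          rw [Finsupp.lsum_single]
          show bL p ⊗ₜ[E] (bL.repr c p • u) = (bL.repr c p • bL p) ⊗ₜ[E] u
          rw [TensorProduct.tmul_smul, TensorProduct.smul_tmul']
        simp_rw [this]
        rw [← TensorProduct.sum_tmul]
        rw [Module.Basis.sum_repr]
      | add x y hx hy => exact add_mem hx hy
    exact this
  obtain ⟨g, hg⟩ := hΨsurj t
  rw [← hg] at ht ⊢
  -- compute the image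
  have himg : fullMap ρ (Ψ g) = ∑ p ∈ g.support, bL p • ((g p : V)) := by
    rw [show Ψ g = g.sum (fun p u => bL p ⊗ₜ[E] u) from rfl]
    rw [Finsupp.sum]
    rw [map_sum]
    rfl
  rw [himg] at ht
  -- trace trick: all g p vanish
  have hg0 : ∀ q, g q = 0 := by
    intro q
    let d : L := (Algebra.traceForm E L).dualBasis (traceForm_nondegenerate E L) bL q
    have key : ∑ p ∈ g.support, Algebra.trace E L (d * bL p) • (g p : V) = 0 := by
      have h0 : ∑ p ∈ g.support, (d * bL p) • (g p : V) = 0 := by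
        have : ∀ p, (d * bL p) • (g p : V) = d • (bL p • (g p : V)) :=
          fun p => by rw [smul_smul]
        simp_rw [this]
        rw [← Finset.smul_sum, ht, smul_zero]
      have h1 : ∑ σ : L ≃ₐ[E] L, ρ σ (∑ p ∈ g.support, (d * bL p) • (g p : V)) = 0 := by
        rw [h0]; simp
      have h2 : ∀ σ : L ≃ₐ[E] L, ρ σ (∑ p ∈ g.support, (d * bL p) • (g p : V))
          = ∑ p ∈ g.support, σ (d * bL p) • (g p : V) := by
        intro σ
        rw [map_sum]
        refine Finset.sum_congr rfl (fun p _ => ?_)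
        rw [hsemi, ((mem_galInvariants_iff ρ _).mp (g p).2) σ]
      rw [Finset.sum_congr rfl (fun σ _ => h2 σ), Finset.sum_comm] at h1
      have h3 : ∀ p ∈ g.support, ∑ σ : L ≃ₐ[E] L, σ (d * bL p) • (g p : V)
          = Algebra.trace E L (d * bL p) • (g p : V) := by
        intro p _
        rw [← Finset.sum_smul, ← trace_eq_sum_automorphisms, algebraMap_smul]
      rw [Finset.sum_congr rfl h3] at h1
      exact h1
    have htr : ∀ p, Algebra.trace E L (d * bL p) = if p = q then 1 else 0 := by
      intro p
      have := LinearMap.BilinForm.apply_dualBasis_left (B := Algebra.traceForm E L)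
        (traceForm_nondegenerate E L) bL q p
      rwa [Algebra.traceForm_apply] at this
    simp_rw [htr] at key
    by_cases hq : q ∈ g.support
    · have : ((g q : V)) = 0 := by
        rw [Finset.sum_eq_single q (fun p _ hpq => by rw [if_neg hpq, zero_smul])
          (fun h => absurd hq h)] at key
        rwa [if_pos rfl, one_smul] at key
      exact Subtype.ext this
    · simpa using hq
  have : g = 0 := Finsupp.ext hg0
  rw [this, map_zero]
end Aux3


/-- abstract Galois-descent form, as in the context: for a finite Galois
extension `L/E`, an `L`-vector space `V` with a semilinear action of `Gal(L/E)`, and an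
intermediate field `F`, the natural map `F ⊗_E V^{Gal(L/E)} → V^{Gal(L/F)}`,
`a ⊗ f ↦ a • f`, is an isomorphism: it is injective and its range is exactly the
submodule of `Gal(L/F)`-invariants.  (For `V = A_L(X)` the ring of bounded analytic
functions of a standard subset `X` defined over `E`, with `A_E(X) = V^{Gal(L/E)}`,
this says that `F ⊗_E A_E(X) → A_F(X)` is an isomorphism.) -/
theorem statement_11 (E L V : Type*) [Field E] [Field L] [Algebra E L]
    [FiniteDimensional E L] [IsGalois E L]
    [AddCommGroup V] [Module E V] [Module L V] [IsScalarTower E L V]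
    (ρ : (L ≃ₐ[E] L) →* Module.End E V)
    (hsemi : ∀ (σ : L ≃ₐ[E] L) (c : L) (v : V), ρ σ (c • v) = σ c • ρ σ v)
    (F : IntermediateField E L) :
    Function.Injective (descentMap E L V ρ F) ∧
      LinearMap.range (descentMap E L V ρ F) = galInvariantsOver E L V ρ F := by
  classical
  let bW := Module.Basis.ofVectorSpace E ↥(galInvariants E L V ρ)
  let w : _ → V := fun i => ((bW i : ↥(galInvariants E L V ρ)) : V)
  have hw : ∀ i, w i ∈ galInvariants E L V ρ := fun i => (bW i).2
  have hindE : LinearIndependent E w :=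
    bW.linearIndependent.map' (galInvariants E L V ρ).subtype (Submodule.ker_subtype _)
  have hindL : LinearIndependent L w := invariants_linearIndependent ρ w hw hsemi hindE
  have hspan : ⊤ ≤ Submodule.span L (Set.range w) := by
    intro v _
    refine Submodule.span_le.mpr ?_ (mem_span_invariants ρ hsemi v)
    intro u hu
    have h1 : (⟨u, hu⟩ : ↥(galInvariants E L V ρ)) ∈ Submodule.span E (Set.range bW) := by
      rw [bW.span_eq]; trivial
    have h3 : u ∈ Submodule.map (galInvariants E L V ρ).subtype
        (Submodule.span E (Set.range bW)) := ⟨_, h1, rfl⟩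
    rw [Submodule.map_span] at h3
    have h4 : (galInvariants E L V ρ).subtype '' Set.range bW = Set.range w := by
      ext x
      constructor
      · rintro ⟨y, ⟨i, rfl⟩, rfl⟩; exact ⟨i, rfl⟩
      · rintro ⟨i, rfl⟩; exact ⟨bW i, ⟨i, rfl⟩, rfl⟩
    rw [h4] at h3
    exact Submodule.span_subset_span E L _ h3
  let bV : Module.Basis _ L V := Module.Basis.mk hindL hspan
  have hbV : ∀ i, bV i = w i := fun i => Module.Basis.mk_apply hindL hspan i
  have hrepr_sum : ∀ v : V, ∑ i ∈ (bV.repr v).support, bV.repr v i • w i = v := by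
    intro v
    conv_rhs => rw [← bV.linearCombination_repr v]
    rw [Finsupp.linearCombination_apply, Finsupp.sum]
    exact Finset.sum_congr rfl fun i _ => by rw [hbV]
  have hcoef : ∀ (v : V) (σ : L ≃ₐ[E] L), ρ σ v = v →
      ∀ i, σ (bV.repr v i) = bV.repr v i := by
    intro v σ hσ i
    have hv := hrepr_sum v
    have h1 : ∑ j ∈ (bV.repr v).support, σ (bV.repr v j) • w j = v := by
      conv_rhs => rw [← hσ]
      conv_rhs => rw [← hv]
      rw [map_sum]
      exact (Finset.sum_congr rfl fun j _ => by
        rw [hsemi, ((mem_galInvariants_iff ρ _).mp (hw j)) σ]).symm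
    have h2 : ∑ j ∈ (bV.repr v).support, (σ (bV.repr v j) - bV.repr v j) • w j = 0 := by
      simp_rw [sub_smul]
      rw [Finset.sum_sub_distrib, h1, hv, sub_self]
    have h3 := linearIndependent_iff'.mp hindL _ _ h2
    by_cases hi : i ∈ (bV.repr v).support
    · exact sub_eq_zero.mp (h3 i hi)
    · have h0 : bV.repr v i = 0 := Finsupp.notMem_support_iff.mp hi
      rw [h0, map_zero]
  have mem_over_iff : ∀ v : V, v ∈ galInvariantsOver E L V ρ F ↔
      ∀ σ : L ≃ₐ[E] L, (∀ x : F, σ (x : L) = (x : L)) → ρ σ v = v := by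
    intro v
    simp only [galInvariantsOver, Submodule.mem_iInf, LinearMap.mem_eqLocus,
      LinearMap.id_apply, Subtype.forall]
  constructor
  · have hcomp : descentMap E L V ρ F
        = (fullMap ρ).comp (LinearMap.rTensor _ (F.val.toLinearMap)) := by
      apply TensorProduct.ext'
      intro a u
      rfl
    rw [hcomp, LinearMap.coe_comp]
    refine (fullMap_injective ρ hsemi).comp
      (Module.Flat.rTensor_preserves_injective_linearMap _ ?_)
    intro x y hxy
    exact Subtype.ext hxy
  · apply le_antisymm
    · rintro x ⟨t, rfl⟩
      induction t using TensorProduct.induction_on with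
      | zero => rw [map_zero]; exact zero_mem _
      | tmul a u =>
        rw [mem_over_iff]
        intro σ hσ
        show ρ σ ((a : L) • (u : V)) = (a : L) • (u : V)
        rw [hsemi, hσ a, ((mem_galInvariants_iff ρ _).mp u.2) σ]
      | add x y hx hy => rw [map_add]; exact add_mem hx hy
    · intro v hv
      rw [mem_over_iff] at hv
      have hfF : ∀ i, bV.repr v i ∈ F := by
        intro i
        rw [← IsGalois.fixedField_fixingSubgroup F]
        intro g
        exact hcoef v g.1
          (hv g.1 (fun x => (mem_fixingSubgroup_iff (L ≃ₐ[E] L)).mp g.2 (x : L) x.2)) i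
      have hv2 : v = ∑ i ∈ (bV.repr v).support, bV.repr v i • w i := (hrepr_sum v).symm
      rw [hv2]
      refine Submodule.sum_mem _ (fun i _ => ?_)
      exact ⟨(⟨bV.repr v i, hfF i⟩ : F) ⊗ₜ[E] bW i, rfl⟩
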